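/- Let p ≥ 2, q = p/(p-1), θ ≥ 1, ε > 0 with εθ ≤ 1, R ≥ 1, and let d_1,…,d_m be positive integers with d = max_i d_i and d_i ≥ d/θ for all i. Then the set T of points x ∈ ℝ^m such that for each i, sign(x_i)|x_i|^{p-1} ∈ (ε d^{1/p}/(d_i m^{1/q}))·ℤ, Σ_i sign(x_i)|x_i|^{p-1} d_i = 0, and Σ_i |x_i|^p d_i ≤ R, is finite of cardinality at most (4eR/ε)^m, provided m is large enough that the ℓ^q-ball volume bound V_q(1) ≤ (2e/m^{1/q})^m holds. -/

import Mathlib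

open Finset MeasureTheory

section Aux

open ENNReal

lemma signRpowMono {r : ℝ} (hr : 0 < r) :
    StrictMono (fun t : ℝ => Real.sign t * |t| ^ r) := by
  intro x y hxy
  simp only
  rcases lt_trichotomy y 0 with hy | hy | hy
  · have hx : x < 0 := hxy.trans hy
    rw [Real.sign_of_neg hx, Real.sign_of_neg hy]
    have h1 : |y| < |x| := by rw [abs_of_neg hx, abs_of_neg hy]; linarith
    have h2 := Real.rpow_lt_rpow (abs_nonneg y) h1 hr
    nlinarith
  · subst hy
    have hx : x < 0 := hxy
    rw [Real.sign_of_neg hx, Real.sign_zero]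
    have : 0 < |x| ^ r := Real.rpow_pos_of_pos (abs_pos.mpr hx.ne) r
    nlinarith
  · rw [Real.sign_of_pos hy]
    have hy' : 0 < |y| ^ r := Real.rpow_pos_of_pos (abs_pos.mpr hy.ne') r
    rcases lt_trichotomy x 0 with hx | hx | hx
    · rw [Real.sign_of_neg hx]
      have : 0 < |x| ^ r := Real.rpow_pos_of_pos (abs_pos.mpr hx.ne) r
      nlinarith
    · subst hx; rw [Real.sign_zero]; nlinarith
    · rw [Real.sign_of_pos hx]
      have h1 : |x| < |y| := by rw [abs_of_pos hx, abs_of_pos hy]; exact hxy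
      have h2 := Real.rpow_lt_rpow (abs_nonneg x) h1 hr
      nlinarith

lemma absSignRpow {r : ℝ} (hr : 0 < r) (t : ℝ) :
    |Real.sign t * |t| ^ r| = |t| ^ r := by
  rcases lt_trichotomy t 0 with ht | ht | ht
  · rw [Real.sign_of_neg ht, abs_mul, abs_neg, abs_one, one_mul,
      abs_of_nonneg (Real.rpow_nonneg (abs_nonneg t) r)]
  · subst ht
    simp [Real.sign_zero, Real.zero_rpow hr.ne']
  · rw [Real.sign_of_pos ht, one_mul, abs_of_nonneg (Real.rpow_nonneg (abs_nonneg t) r)]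

lemma addRpowLe {a b r : ℝ} (ha : 0 ≤ a) (hb : 0 ≤ b) (hr : 1 ≤ r) :
    (a + b) ^ r ≤ 2 ^ (r - 1) * (a ^ r + b ^ r) := by
  have h := NNReal.rpow_add_le_mul_rpow_add_rpow a.toNNReal b.toNNReal hr
  rw [← NNReal.coe_le_coe] at h
  push_cast at h
  rwa [Real.coe_toNNReal _ ha, Real.coe_toNNReal _ hb] at h

lemma intBallFinite (M : ℝ) : {t : ℤ | |(t : ℝ)| ≤ M}.Finite := by
  apply Set.Finite.subset (Set.finite_Icc ⌈-M⌉ ⌊M⌋)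
  intro t ht
  simp only [Set.mem_setOf_eq, abs_le] at ht
  exact Set.mem_Icc.mpr ⟨Int.ceil_le.mpr (by exact_mod_cast ht.1), Int.le_floor.mpr ht.2⟩

lemma cardLeOfInj {α β : Type*} (S : Set α) (Z : Set β) (f : α → β)
    (hinj : Set.InjOn f S) (hsub : ∀ x ∈ S, f x ∈ Z) (hZ : Z.Finite) :
    S.Finite ∧ (Nat.card S : ℝ) ≤ (Z.ncard : ℝ) := by
  have himg : f '' S ⊆ Z := Set.image_subset_iff.mpr hsub
  have hfin : S.Finite := Set.Finite.of_finite_image (hZ.subset himg) hinj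
  refine ⟨hfin, ?_⟩
  have h1 : Nat.card S = S.ncard := Nat.card_coe_set_eq S
  have h2 : S.ncard = (f '' S).ncard := (Set.ncard_image_of_injOn hinj).symm
  have h3 : (f '' S).ncard ≤ Z.ncard := Set.ncard_le_ncard himg hZ
  rw [h1, h2]
  exact_mod_cast h3

lemma latticeCount (m : ℕ) (q R : ℝ) (hq1 : 1 ≤ q) (hR : 1 ≤ R)
    (a : Fin m → ℝ) (ha : ∀ i, 0 < a i) (hsmall : ∑ i, a i ^ q ≤ 1)
    (V : ℝ) (hV : 0 ≤ V)
    (hvol : volume {w : Fin m → ℝ | ∑ i, |w i| ^ q ≤ 1} ≤ ENNReal.ofReal V) :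
    {z : Fin m → ℤ | ∑ i, (a i * |((z i : ℤ) : ℝ)|) ^ q ≤ R}.Finite ∧
    (({z : Fin m → ℤ | ∑ i, (a i * |((z i : ℤ) : ℝ)|) ^ q ≤ R}.ncard : ℝ) ≤
      (∏ i, (2 * R ^ (1/q) / a i)) * V) := by
  have hq0 : (0:ℝ) < q := lt_of_lt_of_le one_pos hq1
  have hR0 : (0:ℝ) < R := lt_of_lt_of_le one_pos hR
  set Z := {z : Fin m → ℤ | ∑ i, (a i * |((z i : ℤ) : ℝ)|) ^ q ≤ R} with hZdef
  have hbound : ∀ z ∈ Z, ∀ i, |((z i : ℤ) : ℝ)| ≤ R ^ (1/q) / a i := by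
    intro z hz i
    have h1 : (a i * |((z i : ℤ) : ℝ)|) ^ q ≤ R := by
      refine le_trans ?_ hz
      exact Finset.single_le_sum (f := fun j => (a j * |((z j : ℤ) : ℝ)|) ^ q)
        (fun j _ => Real.rpow_nonneg (mul_nonneg (ha j).le (abs_nonneg _)) q) (mem_univ i)
    have h2 : a i * |((z i : ℤ) : ℝ)| ≤ R ^ (1/q) := by
      have h3 := Real.rpow_le_rpow (Real.rpow_nonneg (mul_nonneg (ha i).le (abs_nonneg _)) q)
        h1 (by positivity : (0:ℝ) ≤ 1/q)
      rwa [← Real.rpow_mul (mul_nonneg (ha i).le (abs_nonneg _)), mul_one_div,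
        div_self hq0.ne', Real.rpow_one] at h3
    rw [le_div_iff₀ (ha i)]; linarith [h2]
  have hZfin : Z.Finite := by
    apply Set.Finite.subset (Set.Finite.pi (fun i => intBallFinite (R ^ (1/q) / a i)))
    intro z hz
    simp only [Set.mem_pi, Set.mem_univ, Set.mem_setOf_eq, forall_true_left]
    exact fun i => hbound z hz i
  refine ⟨hZfin, ?_⟩
  set B : (Fin m → ℤ) → Set (Fin m → ℝ) :=
    fun z => Set.pi Set.univ fun i => Set.Ico ((z i : ℝ)) ((z i : ℝ) + 1) with hBdef
  have hBmeas : ∀ z, MeasurableSet (B z) := fun z =>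
    MeasurableSet.univ_pi fun i => measurableSet_Ico
  have hBvol : ∀ z, volume (B z) = 1 := by
    intro z
    rw [hBdef]
    rw [volume_pi_pi]
    simp [Real.volume_Ico]
  set F := hZfin.toFinset with hFdef
  have hdisj : (↑F : Set (Fin m → ℤ)).PairwiseDisjoint B := by
    intro z _ z' _ hne
    refine Set.disjoint_left.mpr fun w hw hw' => hne ?_
    funext i
    have h1 := hw i (Set.mem_univ i)
    have h2 := hw' i (Set.mem_univ i)
    simp only [Set.mem_Ico] at h1 h2
    have e1 : ⌊w i⌋ = z i := Int.floor_eq_iff.mpr ⟨h1.1, by push_cast; linarith [h1.2]⟩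
    have e2 : ⌊w i⌋ = z' i := Int.floor_eq_iff.mpr ⟨h2.1, by push_cast; linarith [h2.2]⟩
    rw [← e1, e2]
  set s : ℝ := 2 * R ^ (1/q) with hsdef
  have hs0 : 0 < s := by positivity
  have hsq : s ^ q = 2 ^ q * R := by
    rw [hsdef, Real.mul_rpow (by norm_num) (Real.rpow_nonneg hR0.le _),
      ← Real.rpow_mul hR0.le, one_div, inv_mul_cancel₀ hq0.ne', Real.rpow_one]
  set A := {w : Fin m → ℝ | ∑ i, (a i * |w i|) ^ q ≤ s ^ q} with hAdef
  have hBA : ∀ z ∈ F, B z ⊆ A := by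
    intro z hzF w hw
    have hzZ : z ∈ Z := by rwa [hFdef, Set.Finite.mem_toFinset] at hzF
    have habs : ∀ i, |w i| ≤ |((z i : ℤ) : ℝ)| + 1 := by
      intro i
      have h1 := hw i (Set.mem_univ i)
      simp only [Set.mem_Ico] at h1
      rw [abs_le]
      constructor
      · have := neg_abs_le ((z i : ℝ)); linarith [h1.1]
      · have := le_abs_self ((z i : ℝ)); linarith [h1.2]
    have hterm : ∀ i, (a i * |w i|) ^ q ≤
        2 ^ (q - 1) * ((a i * |((z i : ℤ) : ℝ)|) ^ q + a i ^ q) := by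
      intro i
      have h1 : a i * |w i| ≤ a i * |((z i : ℤ) : ℝ)| + a i := by
        have := mul_le_mul_of_nonneg_left (habs i) (ha i).le
        nlinarith
      have h2 : (a i * |w i|) ^ q ≤ (a i * |((z i : ℤ) : ℝ)| + a i) ^ q :=
        Real.rpow_le_rpow (mul_nonneg (ha i).le (abs_nonneg _)) h1 hq0.le
      exact h2.trans (addRpowLe (mul_nonneg (ha i).le (abs_nonneg _)) (ha i).le hq1)
    have hsum : ∑ i, (a i * |w i|) ^ q ≤ 2 ^ (q - 1) * (R + 1) := by
      calc ∑ i, (a i * |w i|) ^ q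
          ≤ ∑ i, 2 ^ (q - 1) * ((a i * |((z i : ℤ) : ℝ)|) ^ q + a i ^ q) :=
            Finset.sum_le_sum fun i _ => hterm i
        _ = 2 ^ (q - 1) * (∑ i, (a i * |((z i : ℤ) : ℝ)|) ^ q + ∑ i, a i ^ q) := by
            rw [← Finset.mul_sum, Finset.sum_add_distrib]
        _ ≤ 2 ^ (q - 1) * (R + 1) := by
            have h2 : (0:ℝ) < 2 ^ (q - 1) := Real.rpow_pos_of_pos two_pos _
            exact mul_le_mul_of_nonneg_left (add_le_add hzZ hsmall) h2.le
    have h2q : 2 ^ (q - 1) * (R + 1) ≤ 2 ^ q * R := by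
      have he : (2:ℝ) ^ (q-1) = 2 ^ q / 2 := by
        rw [Real.rpow_sub two_pos, Real.rpow_one]
      rw [he]
      have h2 : (0:ℝ) < 2 ^ q := Real.rpow_pos_of_pos two_pos _
      nlinarith
    rw [hAdef, Set.mem_setOf_eq, hsq]
    linarith
  set b : Fin m → ℝ := fun i => s / a i with hbdef
  have hb : ∀ i, 0 < b i := fun i => div_pos hs0 (ha i)
  set L := Matrix.toLin' (Matrix.diagonal b) with hLdef
  have hLapp : ∀ u : Fin m → ℝ, ∀ i, L u i = b i * u i := by
    intro u i
    rw [hLdef, Matrix.toLin'_apply, Matrix.mulVec_diagonal]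
  have hkey : ∀ (i : Fin m) (t : ℝ), (a i * |t|) ^ q = s ^ q * |t / b i| ^ q := by
    intro i t
    rw [abs_div, abs_of_pos (hb i), Real.div_rpow (abs_nonneg t) (hb i).le,
      hbdef]
    simp only
    rw [Real.div_rpow hs0.le (ha i).le]
    rw [Real.mul_rpow (ha i).le (abs_nonneg t)]
    have h1 : (a i) ^ q ≠ 0 := (Real.rpow_pos_of_pos (ha i) q).ne'
    have h2 : s ^ q ≠ 0 := (Real.rpow_pos_of_pos hs0 q).ne'
    field_simp
  have hAeq : A = L '' {w : Fin m → ℝ | ∑ i, |w i| ^ q ≤ 1} := by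
    ext w
    simp only [hAdef, Set.mem_setOf_eq, Set.mem_image]
    constructor
    · intro hw
      refine ⟨fun i => w i / b i, ?_, ?_⟩
      · simp only [Set.mem_setOf_eq]
        have h1 : ∑ i, s ^ q * |w i / b i| ^ q ≤ s ^ q := by
          calc ∑ i, s ^ q * |w i / b i| ^ q = ∑ i, (a i * |w i|) ^ q := by
                refine Finset.sum_congr rfl fun i _ => (hkey i (w i)).symm
            _ ≤ s ^ q := hw
        rw [← Finset.mul_sum] at h1
        have h2 : (0:ℝ) < s ^ q := Real.rpow_pos_of_pos hs0 q
        nlinarith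
      · funext i
        rw [hLapp, mul_comm, div_mul_cancel₀ _ (hb i).ne']
    · rintro ⟨u, hu, rfl⟩
      calc ∑ i, (a i * |L u i|) ^ q = ∑ i, s ^ q * |u i| ^ q := by
            refine Finset.sum_congr rfl fun i _ => ?_
            rw [hLapp, hkey i (b i * u i), mul_div_cancel_left₀ _ (hb i).ne']
        _ = s ^ q * ∑ i, |u i| ^ q := by rw [Finset.mul_sum]
        _ ≤ s ^ q := by
            have h2 : (0:ℝ) < s ^ q := Real.rpow_pos_of_pos hs0 q
            nlinarith
  have hdet : LinearMap.det L = ∏ i, b i := by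
    rw [hLdef, LinearMap.det_toLin', Matrix.det_diagonal]
  have hvolA : volume A ≤ ENNReal.ofReal ((∏ i, b i) * V) := by
    rw [hAeq, Measure.addHaar_image_linearMap, hdet,
      abs_of_nonneg (Finset.prod_nonneg fun i _ => (hb i).le)]
    rw [ENNReal.ofReal_mul (Finset.prod_nonneg fun i _ => (hb i).le)]
    exact mul_le_mul_right hvol _
  have hcount : (F.card : ℝ≥0∞) ≤ ENNReal.ofReal ((∏ i, b i) * V) := by
    have e1 : (F.card : ℝ≥0∞) = ∑ z ∈ F, volume (B z) := by simp [hBvol]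
    have e2 : ∑ z ∈ F, volume (B z) = volume (⋃ z ∈ F, B z) :=
      (measure_biUnion_finset hdisj fun z _ => hBmeas z).symm
    have e3 : volume (⋃ z ∈ F, B z) ≤ volume A := measure_mono (Set.iUnion₂_subset hBA)
    rw [e1, e2]
    exact e3.trans hvolA
  have hprodnn : 0 ≤ ∏ i, b i := Finset.prod_nonneg fun i _ => (hb i).le
  have hcard : (F.card : ℝ) ≤ (∏ i, b i) * V := by
    have h1 : ((F.card : ℝ≥0∞)) = ENNReal.ofReal (F.card : ℝ) := by
      simp [ENNReal.ofReal_natCast]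
    rw [h1] at hcount
    exact (ENNReal.ofReal_le_ofReal_iff (mul_nonneg hprodnn hV)).mp hcount
  rw [Set.ncard_eq_toFinset_card Z hZfin]
  exact hcard

end Aux

theorem stmt13 (m : ℕ) (p θ ε R : ℝ) (hp : 2 ≤ p) (hθ : 1 ≤ θ)
    (hε : 0 < ε) (hεθ : ε * θ ≤ 1) (hR : 1 ≤ R)
    (dvec : Fin m → ℕ) (d : ℕ) (hdpos : ∀ i, 0 < dvec i)
    (hdmax : ∀ i, dvec i ≤ d) (hdtop : ∃ i, dvec i = d)
    (hdmin : ∀ i, (d : ℝ) ≤ θ * (dvec i : ℝ))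
    (hvol : volume {z : Fin m → ℝ | ∑ i, |z i| ^ (p / (p - 1)) ≤ 1} ≤
      ENNReal.ofReal ((2 * Real.exp 1 / (m : ℝ) ^ (1 / (p / (p - 1)))) ^ m)) :
    (Set.Finite {x : Fin m → ℝ |
        (∀ i, ∃ z : ℤ, Real.sign (x i) * |x i| ^ (p - 1) =
          ε * (d : ℝ) ^ (1 / p) / ((dvec i : ℝ) * (m : ℝ) ^ (1 / (p / (p - 1)))) * (z : ℝ)) ∧
        (∑ i, Real.sign (x i) * |x i| ^ (p - 1) * (dvec i : ℝ) = 0) ∧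
        (∑ i, |x i| ^ p * (dvec i : ℝ) ≤ R)}) ∧
    (Nat.card {x : Fin m → ℝ |
        (∀ i, ∃ z : ℤ, Real.sign (x i) * |x i| ^ (p - 1) =
          ε * (d : ℝ) ^ (1 / p) / ((dvec i : ℝ) * (m : ℝ) ^ (1 / (p / (p - 1)))) * (z : ℝ)) ∧
        (∑ i, Real.sign (x i) * |x i| ^ (p - 1) * (dvec i : ℝ) = 0) ∧
        (∑ i, |x i| ^ p * (dvec i : ℝ) ≤ R)} : ℝ) ≤ (4 * Real.exp 1 * R / ε) ^ m := by
  have hp1 : (0:ℝ) < p - 1 := by linarith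
  have hp0 : (0:ℝ) < p := by linarith
  set q : ℝ := p / (p - 1) with hqdef
  have hq0 : 0 < q := div_pos hp0 hp1
  have hq1 : 1 ≤ q := (one_le_div hp1).mpr (by linarith)
  have hqp : (p - 1) * q = p := by rw [hqdef]; field_simp
  have hpq1 : 1/p + 1/q = 1 := by rw [hqdef]; field_simp; ring
  set S : Set (Fin m → ℝ) := {x : Fin m → ℝ |
        (∀ i, ∃ z : ℤ, Real.sign (x i) * |x i| ^ (p - 1) =
          ε * (d : ℝ) ^ (1 / p) / ((dvec i : ℝ) * (m : ℝ) ^ (1 / q)) * (z : ℝ)) ∧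
        (∑ i, Real.sign (x i) * |x i| ^ (p - 1) * (dvec i : ℝ) = 0) ∧
        (∑ i, |x i| ^ p * (dvec i : ℝ) ≤ R)} with hSdef
  rcases Nat.eq_zero_or_pos m with hm0 | hm0
  · subst hm0
    refine ⟨Set.toFinite _, ?_⟩
    have h1 : Nat.card S ≤ 1 := by
      rw [Nat.card_coe_set_eq]
      calc S.ncard ≤ (Set.univ : Set (Fin 0 → ℝ)).ncard :=
            Set.ncard_le_ncard (Set.subset_univ S) Set.finite_univ
        _ = Nat.card (Fin 0 → ℝ) := Set.ncard_univ _
        _ = 1 := Nat.card_unique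
    rw [pow_zero]
    exact_mod_cast h1
  · have hm1 : (1:ℝ) ≤ (m:ℝ) := by exact_mod_cast hm0
    have hmpos : (0:ℝ) < (m:ℝ) := by linarith
    have hmq : 0 < (m:ℝ) ^ (1/q) := Real.rpow_pos_of_pos hmpos _
    have hdv : ∀ i, (0:ℝ) < (dvec i : ℝ) := fun i => by exact_mod_cast hdpos i
    obtain ⟨i₀, hi₀⟩ := hdtop
    have hd1 : (1:ℝ) ≤ (d:ℝ) := by
      have h := hdpos i₀; rw [hi₀] at h; exact_mod_cast h
    have hd0 : (0:ℝ) < (d:ℝ) := by linarith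
    set c : Fin m → ℝ := fun i => ε * (d : ℝ) ^ (1 / p) / ((dvec i : ℝ) * (m : ℝ) ^ (1 / q))
      with hcdef
    have hc : ∀ i, 0 < c i := fun i => by
      simp only [hcdef]
      exact div_pos (mul_pos hε (Real.rpow_pos_of_pos hd0 _)) (mul_pos (hdv i) hmq)
    set a : Fin m → ℝ := fun i => c i * (dvec i : ℝ) ^ (1/q) with hadef
    have ha : ∀ i, 0 < a i := fun i => by
      simp only [hadef]
      exact mul_pos (hc i) (Real.rpow_pos_of_pos (hdv i) _)
    set X : Fin m → ℝ := fun i => ε * ((d:ℝ) / (dvec i : ℝ)) ^ (1/p) with hXdef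
    have hX0 : ∀ i, 0 < X i := fun i => by
      simp only [hXdef]
      exact mul_pos hε (Real.rpow_pos_of_pos (div_pos hd0 (hdv i)) _)
    have hdd : ∀ i, (dvec i:ℝ) ^ (1/p) * (dvec i:ℝ) ^ (1/q) = (dvec i:ℝ) := by
      intro i; rw [← Real.rpow_add (hdv i), hpq1, Real.rpow_one]
    have hXa : ∀ i, a i * (m:ℝ) ^ (1/q) = X i := by
      intro i
      simp only [hadef, hcdef, hXdef]
      rw [Real.div_rpow hd0.le (hdv i).le]
      have h1 : ((dvec i:ℝ)) ≠ 0 := (hdv i).ne'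
      have h2 : (m:ℝ)^(1/q) ≠ 0 := hmq.ne'
      have h3 : (dvec i:ℝ)^(1/p) ≠ 0 := (Real.rpow_pos_of_pos (hdv i) _).ne'
      field_simp
      linear_combination hdd i
    have haX : ∀ i, a i = X i / (m:ℝ)^(1/q) := fun i => by
      rw [← hXa i, mul_div_cancel_right₀ _ hmq.ne']
    have hp1le : (1:ℝ)/p ≤ 1 := by rw [div_le_one hp0]; linarith
    have hX1 : ∀ i, X i ≤ 1 := by
      intro i
      have h1 : (d:ℝ)/(dvec i) ≤ θ := (div_le_iff₀ (hdv i)).mpr (by linarith [hdmin i])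
      have h2 : ((d:ℝ)/(dvec i)) ^ ((1:ℝ)/p) ≤ θ ^ ((1:ℝ)/p) :=
        Real.rpow_le_rpow (by positivity) h1 (by positivity)
      have h3 : θ ^ ((1:ℝ)/p) ≤ θ := by
        calc θ ^ ((1:ℝ)/p) ≤ θ ^ (1:ℝ) := Real.rpow_le_rpow_of_exponent_le hθ hp1le
          _ = θ := Real.rpow_one θ
      have h4 : X i ≤ ε * θ := by
        simp only [hXdef]
        nlinarith [Real.rpow_nonneg (div_nonneg hd0.le (hdv i).le) ((1:ℝ)/p)]
      linarith
    have hXge : ∀ i, ε ≤ X i := by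
      intro i
      have h1 : (1:ℝ) ≤ (d:ℝ)/(dvec i) := (one_le_div (hdv i)).mpr (by exact_mod_cast hdmax i)
      have h2 : (1:ℝ) ≤ ((d:ℝ)/(dvec i)) ^ ((1:ℝ)/p) :=
        Real.one_le_rpow h1 (by positivity)
      simp only [hXdef]
      nlinarith
    have hmm : ((m:ℝ) ^ ((1:ℝ)/q)) ^ q = (m:ℝ) := by
      rw [← Real.rpow_mul hmpos.le, one_div, inv_mul_cancel₀ hq0.ne', Real.rpow_one]
    have hsmall : ∑ i, a i ^ q ≤ 1 := by
      have hterm : ∀ i, a i ^ q ≤ 1 / m := by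
        intro i
        rw [haX i, Real.div_rpow (hX0 i).le hmq.le, hmm]
        have hXq : X i ^ q ≤ 1 := Real.rpow_le_one (hX0 i).le (hX1 i) hq0.le
        gcongr
      calc ∑ i, a i ^ q ≤ ∑ _i : Fin m, (1:ℝ)/m := Finset.sum_le_sum fun i _ => hterm i
        _ = m * (1/m) := by
            rw [Finset.sum_const, Finset.card_univ, Fintype.card_fin, nsmul_eq_mul]
        _ = 1 := by field_simp
    set V : ℝ := (2 * Real.exp 1 / (m : ℝ) ^ (1 / q)) ^ m with hVdef
    have hV : 0 ≤ V := by
      simp only [hVdef]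
      positivity
    obtain ⟨hZfin, hZcard⟩ := latticeCount m q R hq1 hR a ha hsmall V hV hvol
    set Φ : (Fin m → ℝ) → (Fin m → ℤ) :=
      fun x i => ⌊Real.sign (x i) * |x i| ^ (p-1) / c i⌋ with hΦdef
    have hΦ : ∀ x ∈ S, ∀ i, Real.sign (x i) * |x i| ^ (p - 1) = c i * ((Φ x i : ℤ) : ℝ) := by
      intro x hx i
      rw [hSdef] at hx
      obtain ⟨z, hz⟩ := hx.1 i
      have hz' : Real.sign (x i) * |x i| ^ (p - 1) = c i * (z:ℝ) := by
        simp only [hcdef]; exact hz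
      simp only [hΦdef]
      rw [hz', mul_div_cancel_left₀ _ (hc i).ne', Int.floor_intCast]
    have habsx : ∀ x ∈ S, ∀ i, |x i| ^ (p - 1) = c i * |((Φ x i : ℤ) : ℝ)| := by
      intro x hx i
      have h1 := hΦ x hx i
      have h2 : |Real.sign (x i) * |x i| ^ (p - 1)| = |x i| ^ (p-1) := absSignRpow hp1 _
      rw [h1] at h2
      rw [← h2, abs_mul, abs_of_pos (hc i)]
    have hsub : ∀ x ∈ S, Φ x ∈ {z : Fin m → ℤ | ∑ i, (a i * |((z i : ℤ) : ℝ)|) ^ q ≤ R} := by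
      intro x hx
      simp only [Set.mem_setOf_eq]
      have hxR : ∑ i, |x i| ^ p * (dvec i : ℝ) ≤ R := by
        rw [hSdef] at hx; exact hx.2.2
      refine le_trans (le_of_eq ?_) hxR
      refine Finset.sum_congr rfl fun i _ => ?_
      have e1 : a i * |((Φ x i : ℤ) : ℝ)| = (c i * |((Φ x i : ℤ) : ℝ)|) * (dvec i:ℝ)^((1:ℝ)/q) := by
        simp only [hadef]; ring
      have e2 : ((dvec i:ℝ)^((1:ℝ)/q))^q = (dvec i:ℝ) := by
        rw [← Real.rpow_mul (hdv i).le, one_div, inv_mul_cancel₀ hq0.ne', Real.rpow_one]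
      rw [e1, Real.mul_rpow (mul_nonneg (hc i).le (abs_nonneg _))
        (Real.rpow_nonneg (hdv i).le _), e2, ← habsx x hx i,
        ← Real.rpow_mul (abs_nonneg (x i)), hqp]
    have hinj : Set.InjOn Φ S := by
      intro x hx x' hx' h
      funext i
      have h0 := congrFun h i
      have h1 := hΦ x hx i
      have h2 := hΦ x' hx' i
      apply (signRpowMono hp1).injective
      simp only
      rw [h1, h2, h0]
    obtain ⟨hSfin, hScard⟩ := cardLeOfInj S _ Φ hinj hsub hZfin
    refine ⟨hSfin, ?_⟩
    refine hScard.trans (hZcard.trans ?_)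
    have hRq : R ^ ((1:ℝ)/q) ≤ R := by
      calc R ^ ((1:ℝ)/q) ≤ R ^ (1:ℝ) :=
            Real.rpow_le_rpow_of_exponent_le hR (by rw [div_le_one hq0]; linarith)
        _ = R := Real.rpow_one R
    have hfac : ∀ i, 2 * R ^ ((1:ℝ)/q) / a i ≤ 2 * R * (m:ℝ)^((1:ℝ)/q) / ε := by
      intro i
      have hai : ε / (m:ℝ)^((1:ℝ)/q) ≤ a i := by
        rw [haX i]
        gcongr
        exact hXge i
      have h1 : 2 * R ^ ((1:ℝ)/q) / a i ≤ (2 * R) / (ε / (m:ℝ)^((1:ℝ)/q)) := by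
        apply div_le_div₀ (by positivity) (by nlinarith) (by positivity) hai
      calc 2 * R ^ ((1:ℝ)/q) / a i ≤ (2*R) / (ε / (m:ℝ)^((1:ℝ)/q)) := h1
        _ = 2 * R * (m:ℝ)^((1:ℝ)/q) / ε := by rw [div_div_eq_mul_div]
    have hprod : (∏ i, (2 * R ^ ((1:ℝ)/q) / a i)) ≤ (2 * R * (m:ℝ)^((1:ℝ)/q) / ε) ^ m := by
      calc ∏ i, (2 * R ^ ((1:ℝ)/q) / a i) ≤ ∏ _i : Fin m, (2 * R * (m:ℝ)^((1:ℝ)/q) / ε) :=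
            Finset.prod_le_prod (fun i _ => by positivity) (fun i _ => hfac i)
        _ = (2 * R * (m:ℝ)^((1:ℝ)/q) / ε) ^ m := by
            rw [Finset.prod_const, Finset.card_univ, Fintype.card_fin]
    calc (∏ i, (2 * R ^ ((1:ℝ)/q) / a i)) * V ≤ (2 * R * (m:ℝ)^((1:ℝ)/q) / ε) ^ m * V :=
          mul_le_mul_of_nonneg_right hprod hV
      _ = ((2 * R * (m:ℝ)^((1:ℝ)/q) / ε) * (2 * Real.exp 1 / (m:ℝ)^((1:ℝ)/q))) ^ m := by
          rw [hVdef, mul_pow]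
      _ = (4 * Real.exp 1 * R / ε) ^ m := by
          congr 1
          field_simp
          ring
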